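/- Consider the recursively defined maps z₁ = σ₀(W₀x + b₀) and z_{i+1} = σᵢ(Uᵢzᵢ + Wᵢx + bᵢ) for i = 1, …, k−1, where x ∈ ℝᵈ, each Wᵢ is a real matrix and bᵢ a real vector of compatible size, each Uᵢ is a matrix with nonnegative entries, and each σᵢ : ℝ → ℝ is convex and monotone non-decreasing and is applied componentwise. Then every scalar component of the output z_k is a convex function of the input x ∈ ℝᵈ. -/

import Mathlib

private lemma convexOn_sum' {d : ℕ} {ι : Type*} (t : Finset ι)
    (f : ι → (Fin d → ℝ) → ℝ) (hf : ∀ i ∈ t, ConvexOn ℝ Set.univ (f i)) :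
    ConvexOn ℝ Set.univ (fun x => ∑ i ∈ t, f i x) := by
  classical
  induction t using Finset.induction with
  | empty => simpa using convexOn_const 0 convex_univ
  | @insert a s hni ih =>
    simp only [Finset.sum_insert hni]
    exact (hf _ (Finset.mem_insert_self _ _)).add
      (ih fun i hi => hf i (Finset.mem_insert_of_mem hi))

private lemma convexOn_affine {d n : ℕ} (M : Matrix (Fin n) (Fin d) ℝ)
    (c : ℝ) (j : Fin n) : ConvexOn ℝ Set.univ (fun x : Fin d → ℝ => M.mulVec x j + c) := by
  refine ⟨convex_univ, fun x _ y _ a b ha hb hab => ?_⟩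
  simp only [smul_eq_mul]
  rw [Matrix.mulVec_add, Matrix.mulVec_smul, Matrix.mulVec_smul]
  simp only [Pi.add_apply, Pi.smul_apply, smul_eq_mul]
  have h : a * (M.mulVec x j + c) + b * (M.mulVec y j + c)
      = a * M.mulVec x j + b * M.mulVec y j + c := by linear_combination c * hab
  rw [h]

private lemma convexOn_comp_mono {d : ℕ} {σ : ℝ → ℝ}
    (hconv : ConvexOn ℝ Set.univ σ) (hmono : Monotone σ)
    {f : (Fin d → ℝ) → ℝ} (hf : ConvexOn ℝ Set.univ f) :
    ConvexOn ℝ Set.univ (fun x => σ (f x)) := by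
  refine ⟨convex_univ, fun x _ y _ a b ha hb hab => ?_⟩
  calc σ (f (a • x + b • y)) ≤ σ (a • f x + b • f y) :=
        hmono (hf.2 trivial trivial ha hb hab)
    _ ≤ a • σ (f x) + b • σ (f y) :=
        hconv.2 trivial trivial ha hb hab

/-- Input convex neural network (ICNN, Eq. (6) of the paper): with
`z₁ = σ₀(W₀ x + b₀)` and `z_{i+1} = σᵢ(Uᵢ zᵢ + Wᵢ x + bᵢ)` where the `Uᵢ` have
nonnegative entries and the activations `σᵢ` are convex and monotone
non-decreasing (applied componentwise), every scalar component of the output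
`z_k` is a convex function of the input `x ∈ ℝᵈ`. -/
theorem stmt_5 (d k : ℕ) (dims : Fin (k + 1) → ℕ)
    (W : ∀ i : Fin (k + 1), Matrix (Fin (dims i)) (Fin d) ℝ)
    (b : ∀ i : Fin (k + 1), Fin (dims i) → ℝ)
    (U : ∀ i : Fin k, Matrix (Fin (dims i.succ)) (Fin (dims i.castSucc)) ℝ)
    (hU : ∀ (i : Fin k) (r : Fin (dims i.succ)) (c : Fin (dims i.castSucc)), 0 ≤ U i r c)
    (σ : Fin (k + 1) → ℝ → ℝ)
    (hσconv : ∀ i : Fin (k + 1), ConvexOn ℝ Set.univ (σ i))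
    (hσmono : ∀ i : Fin (k + 1), Monotone (σ i))
    (z : ∀ i : Fin (k + 1), (Fin d → ℝ) → Fin (dims i) → ℝ)
    (hz0 : ∀ (x : Fin d → ℝ) (j : Fin (dims 0)),
      z 0 x j = σ 0 ((W 0).mulVec x j + b 0 j))
    (hzsucc : ∀ (i : Fin k) (x : Fin d → ℝ) (j : Fin (dims i.succ)),
      z i.succ x j =
        σ i.succ ((U i).mulVec (z i.castSucc x) j + (W i.succ).mulVec x j + b i.succ j)) :
    ∀ j : Fin (dims (Fin.last k)), ConvexOn ℝ Set.univ (fun x : Fin d → ℝ => z (Fin.last k) x j) := by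
  suffices h : ∀ i : Fin (k + 1), ∀ j : Fin (dims i),
      ConvexOn ℝ Set.univ (fun x : Fin d → ℝ => z i x j) from h (Fin.last k)
  intro i
  induction i using Fin.induction with
  | zero =>
    intro j
    simp only [hz0]
    exact convexOn_comp_mono (hσconv 0) (hσmono 0) (convexOn_affine _ _ _)
  | succ i ih =>
    intro j
    simp only [hzsucc]
    refine convexOn_comp_mono (hσconv i.succ) (hσmono i.succ) ?_
    have h1 : ConvexOn ℝ Set.univ
        (fun x : Fin d → ℝ => (U i).mulVec (z i.castSucc x) j) := by
      have : (fun x : Fin d → ℝ => (U i).mulVec (z i.castSucc x) j)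
          = fun x => ∑ c, U i j c * z i.castSucc x c := by
        funext x; rfl
      rw [this]
      exact convexOn_sum' _ _ (fun c _ => by
        simpa [smul_eq_mul] using (ih c).smul (hU i j c))
    have h2 := convexOn_affine (W i.succ) (b i.succ j) j
    have := h1.add h2
    simpa [add_assoc, Pi.add_def] using this
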